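/- Let p be an odd prime and let a ∈ ZMod p with a ≠ 0. The permutation π⁻¹ ∘ π_{(a,0)} of ZMod p × ZMod p has exactly one fixed point, namely (a·(y−1)⁻¹, 0), and exactly two orbits of size at least 2: one orbit is precisely the set {(a·(y−1)⁻¹, d) : d ∈ ZMod p, d ≠ 0} of size p − 1, and the other orbit has size p² − p and contains (0,0). -/

import Mathlib

/-- The map `π_{(a,b)}` on `ZMod p × ZMod p` (with `x` a fixed primitive root mod `p`). -/
def piab {p : ℕ} (x a b : ZMod p) : ZMod p × ZMod p → ZMod p × ZMod p :=
  fun cd =>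
    if cd.1 = 0 then
      if a + b + cd.2 ≠ 0 then (a, a + b + cd.2) else (a + x * b, 0)
    else
      if b + cd.2 = 0 then (a + cd.1 + x * b, 0) else (a + cd.1, b + cd.2)

/-- The composite `π⁻¹ ∘ π_{(a,b)}`, where `π(c,d) = (x⁻¹·c, x·d)`,
so `π⁻¹(c,d) = (x·c, x⁻¹·d)`. -/
def piInvPiab {p : ℕ} (x a b : ZMod p) : ZMod p × ZMod p → ZMod p × ZMod p :=
  fun cd => (x * (piab x a b cd).1, x⁻¹ * (piab x a b cd).2)

/-- The orbit of `u` under `f`: the set `{fᵏ(u) : k ∈ ℕ}`. -/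
def orbit {α : Type*} (f : α → α) (u : α) : Set α :=
  {v | ∃ k : ℕ, f^[k] u = v}

/-- The set `𝓘⁽²⁾ = {(0,1), (1,0)} ∪ {(z,z) : z ≠ 0} ∪ {(z, z·x) : z ≠ 0}`. -/
def I2 (p : ℕ) (x : ZMod p) : Set (ZMod p × ZMod p) :=
  {q | q = (0, 1) ∨ q = (1, 0) ∨ (q.1 ≠ 0 ∧ q.2 = q.1) ∨ (q.1 ≠ 0 ∧ q.2 = q.1 * x)}

lemma orbit_fixed {α : Type*} {f : α → α} {u : α} (h : f u = u) : orbit f u = {u} := by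
  ext w
  constructor
  · rintro ⟨k, rfl⟩
    have : ∀ k : ℕ, f^[k] u = u := by
      intro k; induction k with
      | zero => rfl
      | succ k ih => rw [Function.iterate_succ_apply', ih, h]
    simp [this k]
  · rintro rfl; exact ⟨0, rfl⟩

lemma orbit_eq_of_mem {α : Type*} [Finite α] {f : α → α} (hf : Function.Injective f)
    {u w : α} (hw : w ∈ orbit f u) : orbit f w = orbit f u := by
  obtain ⟨k, hk⟩ := hw
  obtain ⟨i, j, hij, hiju⟩ : ∃ i j : ℕ, i ≠ j ∧ f^[i] u = f^[j] u := by
    obtain ⟨i, j, hij, h⟩ := Finite.exists_ne_map_eq_of_infinite (fun n : ℕ => f^[n] u)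
    exact ⟨i, j, hij, h⟩
  wlog hlt : i < j generalizing i j
  · exact this j i (Ne.symm hij) hiju.symm (by omega)
  have hnu : f^[j - i] u = u := by
    have : f^[i] (f^[j - i] u) = f^[i] u := by
      rw [← Function.iterate_add_apply, show i + (j - i) = j by omega, hiju]
    exact (hf.iterate i this)
  set n := j - i with hn
  have hnpos : 0 < n := by omega
  have hmul : ∀ c : ℕ, f^[c * n] u = u := by
    intro c; induction c with
    | zero => simp
    | succ c ih =>
      rw [Nat.succ_mul, Function.iterate_add_apply, hnu, ih]
  ext z
  constructor
  · rintro ⟨m, rfl⟩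
    exact ⟨m + k, by rw [Function.iterate_add_apply, hk]⟩
  · rintro ⟨m, rfl⟩
    refine ⟨m + k * (n - 1), ?_⟩
    rw [← hk, ← Function.iterate_add_apply]
    have h2 : k * (n - 1) + k = k * n := by
      rw [← Nat.mul_succ]
      congr 1
      omega
    rw [show m + k * (n - 1) + k = m + (k * (n - 1) + k) from by omega, h2,
      Function.iterate_add_apply]
    congr 1
    exact hmul k

theorem stmt15 (p : ℕ) (hp : p.Prime) (hodd : Odd p) (x : ZMod p)
    (hx : ∀ z : ZMod p, z ≠ 0 → ∃ k : ℕ, x ^ k = z) (a : ZMod p) (ha : a ≠ 0) :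
    (∀ cd : ZMod p × ZMod p,
      piInvPiab x a 0 cd = cd ↔ cd = (a * (x⁻¹ - 1)⁻¹, 0)) ∧
    ∃ u v : ZMod p × ZMod p,
      orbit (piInvPiab x a 0) u =
        {q : ZMod p × ZMod p | q.1 = a * (x⁻¹ - 1)⁻¹ ∧ q.2 ≠ 0} ∧
      (orbit (piInvPiab x a 0) u).ncard = p - 1 ∧
      (orbit (piInvPiab x a 0) v).ncard = p ^ 2 - p ∧
      (0, 0) ∈ orbit (piInvPiab x a 0) v ∧
      ∀ w : ZMod p × ZMod p, 2 ≤ (orbit (piInvPiab x a 0) w).ncard →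
        orbit (piInvPiab x a 0) w = orbit (piInvPiab x a 0) u ∨
        orbit (piInvPiab x a 0) w = orbit (piInvPiab x a 0) v := by
  haveI : Fact p.Prime := ⟨hp⟩
  have hp3 : 3 ≤ p := by
    have h1 := hp.two_le
    have h2 := Nat.odd_iff.mp hodd
    omega
  haveI : Fact (2 < p) := ⟨by omega⟩
  have hne1 : (-1 : ZMod p) ≠ 1 := ZMod.neg_one_ne_one
  have hneg0 : (-1 : ZMod p) ≠ 0 := by
    simp only [ne_eq, neg_eq_zero]; exact one_ne_zero
  -- x is nonzero and ≠ 1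
  have hx0 : x ≠ 0 := by
    rintro rfl
    obtain ⟨k, hk⟩ := hx (-1) hneg0
    cases k with
    | zero => simp at hk; exact hne1 hk.symm
    | succ k => rw [pow_succ, mul_zero] at hk; exact hneg0 hk.symm
  have hx1 : x ≠ 1 := by
    rintro rfl
    obtain ⟨k, hk⟩ := hx (-1) hneg0
    rw [one_pow] at hk
    exact hne1 hk.symm
  have hxp : x ^ (p - 1) = 1 := ZMod.pow_card_sub_one_eq_one hx0
  have hp1pos : 0 < p - 1 := by omega
  -- orderOf x = p - 1
  have hfin : IsOfFinOrder x := isOfFinOrder_iff_pow_eq_one.mpr ⟨p - 1, hp1pos, hxp⟩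
  have hopos : 0 < orderOf x := orderOf_pos_iff.mpr hfin
  have horder : orderOf x = p - 1 := by
    have hdvd : orderOf x ∣ p - 1 := orderOf_dvd_of_pow_eq_one hxp
    have hle : p - 1 ≤ orderOf x := by
      have hsub : (Finset.univ.filter (fun z : ZMod p => z ≠ 0)) ⊆
          (Finset.range (orderOf x)).image (x ^ ·) := by
        intro z hz
        simp only [Finset.mem_filter, Finset.mem_univ, true_and] at hz
        obtain ⟨k, hk⟩ := hx z hz
        simp only [Finset.mem_image, Finset.mem_range]
        exact ⟨k % orderOf x, Nat.mod_lt _ hopos, by rw [pow_mod_orderOf, hk]⟩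
      have h1 : (Finset.univ.filter (fun z : ZMod p => z ≠ 0)).card = p - 1 := by
        rw [Finset.filter_ne', Finset.card_erase_of_mem (Finset.mem_univ _),
          Finset.card_univ, ZMod.card]
      calc p - 1 = _ := h1.symm
        _ ≤ ((Finset.range (orderOf x)).image (x ^ ·)).card := Finset.card_le_card hsub
        _ ≤ (Finset.range (orderOf x)).card := Finset.card_image_le
        _ = orderOf x := Finset.card_range _
    exact le_antisymm (Nat.le_of_dvd hp1pos hdvd) hle
  have hker : ∀ k : ℕ, x ^ k = 1 ↔ (p - 1) ∣ k := by
    intro k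
    rw [← horder, ← orderOf_dvd_iff_pow_eq_one]
  have hsurj' : ∀ z : ZMod p, z ≠ 0 → ∃ r : ℕ, 1 ≤ r ∧ r ≤ p - 1 ∧ x ^ r = z := by
    intro z hz
    obtain ⟨k, hk⟩ := hx z hz
    have hmod : x ^ (k % (p - 1)) = z := by
      rw [← horder] at *
      rw [pow_mod_orderOf, hk]
    rcases Nat.eq_zero_or_pos (k % (p - 1)) with h0 | h0
    · refine ⟨p - 1, hp1pos, le_refl _, ?_⟩
      rw [hxp, ← hmod, h0, pow_zero]
    · exact ⟨k % (p - 1), h0, le_of_lt (Nat.mod_lt _ hp1pos), hmod⟩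
  -- facts about y = x⁻¹
  set y := x⁻¹ with hydef
  have hxy : x * y = 1 := mul_inv_cancel₀ hx0
  have hy0 : y ≠ 0 := inv_ne_zero hx0
  have hy1 : y ≠ 1 := by
    intro h
    rw [h, mul_one] at hxy
    exact hx1 hxy
  have hyp : y ^ (p - 1) = 1 := by
    rw [hydef, inv_pow, hxp, inv_one]
  have hysurj : ∀ z : ZMod p, z ≠ 0 → ∃ k : ℕ, y ^ k = z := by
    intro z hz
    obtain ⟨k, hk⟩ := hx z⁻¹ (inv_ne_zero hz)
    exact ⟨k, by rw [hydef, inv_pow, hk, inv_inv]⟩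
  have hym : y - 1 ≠ 0 := sub_ne_zero.mpr hy1
  set c0 := a * (y - 1)⁻¹ with hc0def
  have hc0 : c0 ≠ 0 := mul_ne_zero ha (inv_ne_zero hym)
  have h1 : c0 * (y - 1) = a := by
    rw [hc0def, mul_assoc, inv_mul_cancel₀ hym, mul_one]
  have hkey : x * (a + c0) = c0 := by
    linear_combination c0 * hxy - x * h1
  set f := piInvPiab x a 0 with hfdef
  -- the one-step formula
  have fstep : ∀ cd : ZMod p × ZMod p,
      f cd = if cd.1 = 0 then (x * a, y * (a + cd.2)) else (x * (a + cd.1), y * cd.2) := by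
    intro ⟨c, d⟩
    simp only [hfdef, piInvPiab, piab, mul_zero, add_zero, zero_add, ← hydef]
    by_cases hc : c = 0
    · subst hc
      by_cases hd : a + d = 0
      · simp [hd, show a + d ≠ 0 ↔ False from by simp [hd]]
      · simp [hd]
    · simp only [hc, if_false, ite_not]
      by_cases hd : d = 0
      · simp [hd]
      · simp [hd]
  have hx1' : x - 1 ≠ 0 := sub_ne_zero.mpr hx1
  -- fixed point characterization
  have hfix : ∀ cd : ZMod p × ZMod p, f cd = cd ↔ cd = (c0, 0) := by
    intro ⟨c, d⟩
    rw [fstep]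
    constructor
    · intro h
      by_cases hc : c = 0
      · rw [if_pos hc] at h
        have : x * a = c := congrArg Prod.fst h
        rw [← this] at hc
        exact absurd hc (mul_ne_zero hx0 ha)
      · rw [if_neg hc] at h
        have h2 : x * (a + c) = c := congrArg Prod.fst h
        have h3 : y * d = d := congrArg Prod.snd h
        have hd0 : d = 0 := by
          have : (y - 1) * d = 0 := by linear_combination h3
          rcases mul_eq_zero.mp this with h | h
          · exact absurd h hym
          · exact h
        have hcc : c = c0 := by
          have h4 : (x - 1) * (c - c0) = 0 := by linear_combination h2 - hkey
          rcases mul_eq_zero.mp h4 with h | h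
          · exact absurd h hx1'
          · exact sub_eq_zero.mp h
        rw [hd0, hcc]
    · rintro h
      rw [Prod.mk.injEq] at h
      obtain ⟨rfl, rfl⟩ := h
      rw [if_neg hc0, hkey, mul_zero]
  -- orbit of u = (c0, 1)
  set u : ZMod p × ZMod p := (c0, 1) with hudef
  have hiter_u : ∀ k : ℕ, f^[k] u = (c0, y ^ k) := by
    intro k; induction k with
    | zero => simp [hudef]
    | succ k ih =>
      rw [Function.iterate_succ_apply', ih, fstep]
      simp only [if_neg hc0, hkey]
      rw [Prod.mk.injEq]
      exact ⟨rfl, by rw [pow_succ]; ring⟩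
  have horbu : orbit f u = {q : ZMod p × ZMod p | q.1 = c0 ∧ q.2 ≠ 0} := by
    ext ⟨c, d⟩
    constructor
    · rintro ⟨k, hk⟩
      rw [hiter_u k, Prod.mk.injEq] at hk
      obtain ⟨rfl, rfl⟩ := hk
      exact ⟨rfl, pow_ne_zero _ hy0⟩
    · rintro ⟨hc, hd⟩
      obtain ⟨k, hk⟩ := hysurj d hd
      refine ⟨k, ?_⟩
      rw [hiter_u k, hk]
      simp only [Set.mem_setOf_eq] at hc ⊢
      rw [Prod.mk.injEq]
      exact ⟨hc.symm, rfl⟩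
  -- cardinality helpers
  have hcard_ne : ∀ z : ZMod p, ({w : ZMod p | w ≠ z}).ncard = p - 1 := by
    intro z
    have h := Set.ncard_add_ncard_compl ({z} : Set (ZMod p)) (Set.toFinite _) (Set.toFinite _)
    have h2 : ({z} : Set (ZMod p)).ncard = 1 := Set.ncard_singleton z
    have h3 : Nat.card (ZMod p) = p := by
      rw [Nat.card_eq_fintype_card, ZMod.card]
    have h4 : ({z} : Set (ZMod p))ᶜ = {w : ZMod p | w ≠ z} := by
      ext w; simp
    rw [h2, h4, h3] at h
    omega
  have hcardu : (orbit f u).ncard = p - 1 := by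
    rw [horbu]
    have him : {q : ZMod p × ZMod p | q.1 = c0 ∧ q.2 ≠ 0}
        = (fun d => (c0, d)) '' {d : ZMod p | d ≠ 0} := by
      ext ⟨c, d⟩
      simp only [Set.mem_setOf_eq, Set.mem_image]
      constructor
      · rintro ⟨rfl, hd⟩; exact ⟨d, hd, rfl⟩
      · rintro ⟨e, he, hh⟩
        rw [Prod.mk.injEq] at hh
        obtain ⟨rfl, rfl⟩ := hh
        exact ⟨rfl, he⟩
    rw [him, Set.ncard_image_of_injective _ (fun d1 d2 h => by
      simpa using congrArg Prod.snd h), hcard_ne 0]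
  -- orbit of v = (0, 0)
  set v : ZMod p × ZMod p := (0, 0) with hvdef
  have S1 : ∀ r : ℕ, 1 ≤ r → r ≤ p - 1 → ∀ e : ZMod p,
      f^[r] (0, e) = (c0 - c0 * x ^ r, y ^ r * (a + e)) := by
    intro r
    induction r with
    | zero => omega
    | succ r ih =>
      intro hr1 hr2 e
      rcases Nat.eq_zero_or_pos r with hr0 | hr0
      · subst hr0
        have hcond : ((0 : ZMod p), e).1 = 0 := rfl
        rw [Function.iterate_one, fstep, if_pos hcond, Prod.mk.injEq]
        exact ⟨by rw [pow_one]; linear_combination hkey, by rw [pow_one]⟩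
      · have hxr : x ^ r ≠ 1 := by
          intro h
          have := (hker r).mp h
          have := Nat.le_of_dvd hr0 this
          omega
        have ih' := ih hr0 (by omega) e
        rw [Function.iterate_succ_apply', ih', fstep]
        have hne : c0 - c0 * x ^ r ≠ 0 := by
          intro h
          apply hxr
          have h2 : c0 * (1 - x ^ r) = 0 := by linear_combination h
          rcases mul_eq_zero.mp h2 with h3 | h3
          · exact absurd h3 hc0
          · linear_combination -h3
        simp only [if_neg hne]
        rw [Prod.mk.injEq]
        constructor
        · rw [pow_succ]; linear_combination hkey
        · rw [pow_succ]; ring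
  have S2 : ∀ e : ZMod p, f^[p - 1] (0, e) = (0, a + e) := by
    intro e
    rw [S1 (p - 1) hp1pos (le_refl _) e, hxp, hyp]
    rw [Prod.mk.injEq]
    constructor
    · ring
    · ring
  have S3 : ∀ t : ℕ, f^[t * (p - 1)] v = (0, (t : ZMod p) * a) := by
    intro t
    induction t with
    | zero => simp [hvdef]
    | succ t ih =>
      rw [Nat.succ_mul, Nat.add_comm, Function.iterate_add_apply, ih, S2]
      rw [Prod.mk.injEq]
      refine ⟨rfl, ?_⟩
      push_cast
      ring
  have S4 : ∀ t r : ℕ, 1 ≤ r → r ≤ p - 1 →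
      f^[r + t * (p - 1)] v = (c0 - c0 * x ^ r, y ^ r * (a + (t : ZMod p) * a)) := by
    intro t r hr1 hr2
    rw [Function.iterate_add_apply, S3, S1 r hr1 hr2]
  have horbv : orbit f v = {q : ZMod p × ZMod p | q.1 ≠ c0} := by
    ext ⟨c, d⟩
    constructor
    · rintro ⟨k, hk⟩
      -- invariant : first coordinate never equals c0
      have hinv : ∀ k : ℕ, (f^[k] v).1 ≠ c0 := by
        intro k; induction k with
        | zero => simpa [hvdef] using (Ne.symm hc0)
        | succ k ih =>
          rw [Function.iterate_succ_apply', fstep]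
          by_cases hq : (f^[k] v).1 = 0
          · simp only [if_pos hq]
            intro h
            apply hc0
            have h2 : x * c0 = 0 := by linear_combination hkey - h
            rcases mul_eq_zero.mp h2 with h3 | h3
            · exact absurd h3 hx0
            · exact h3
          · simp only [if_neg hq]
            intro h
            apply ih
            have h2 : x * ((f^[k] v).1 - c0) = 0 := by linear_combination h - hkey
            rcases mul_eq_zero.mp h2 with h3 | h3
            · exact absurd h3 hx0
            · exact sub_eq_zero.mp h3
      rw [← hk]
      exact hinv k
    · intro hcne
      simp only [Set.mem_setOf_eq] at hcne
      -- pick r with x^r = (c0 - c) * c0⁻¹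
      have hz : (c0 - c) * c0⁻¹ ≠ 0 := by
        apply mul_ne_zero (sub_ne_zero.mpr (Ne.symm hcne)) (inv_ne_zero hc0)
      obtain ⟨r, hr1, hr2, hrx⟩ := hsurj' _ hz
      have hfst : c0 - c0 * x ^ r = c := by
        rw [hrx]
        field_simp
        ring
      -- pick t with y^r * (a + t*a) = d
      have hay : a * y ^ r ≠ 0 := mul_ne_zero ha (pow_ne_zero _ hy0)
      set wv : ZMod p := d * (a * y ^ r)⁻¹ - 1 with hwv
      refine ⟨r + wv.val * (p - 1), ?_⟩
      rw [S4 wv.val r hr1 hr2, hfst, Prod.mk.injEq]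
      refine ⟨rfl, ?_⟩
      have hcast : ((wv.val : ℕ) : ZMod p) = wv := by
        rw [ZMod.natCast_val, ZMod.cast_id]
      rw [hcast, hwv]
      field_simp
      ring
  have hcardv : (orbit f v).ncard = p ^ 2 - p := by
    rw [horbv]
    have hprod : {q : ZMod p × ZMod p | q.1 ≠ c0}
        = {c : ZMod p | c ≠ c0} ×ˢ (Set.univ : Set (ZMod p)) := by
      ext ⟨c, d⟩; simp [Set.mem_prod]
    rw [hprod, ← Nat.card_coe_set_eq, Nat.card_congr (Equiv.Set.prod _ _),
      Nat.card_prod, Nat.card_coe_set_eq, Nat.card_coe_set_eq, hcard_ne c0,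
      Set.ncard_univ, Nat.card_eq_fintype_card, ZMod.card,
      show p ^ 2 - p = (p - 1) * p from by rw [Nat.sub_mul, one_mul, sq]]
  -- injectivity of f
  have hinj : Function.Injective f := by
    intro q1 q2 h
    rw [fstep q1, fstep q2] at h
    by_cases h1 : q1.1 = 0 <;> by_cases h2 : q2.1 = 0
    · rw [if_pos h1, if_pos h2, Prod.mk.injEq] at h
      have := mul_left_cancel₀ hy0 h.2
      have h22 : q1.2 = q2.2 := by linear_combination this
      exact Prod.ext (h1.trans h2.symm) h22
    · rw [if_pos h1, if_neg h2, Prod.mk.injEq] at h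
      exfalso
      apply h2
      have := mul_left_cancel₀ hx0 h.1
      linear_combination -this
    · rw [if_neg h1, if_pos h2, Prod.mk.injEq] at h
      exfalso
      apply h1
      have := mul_left_cancel₀ hx0 h.1
      linear_combination this
    · rw [if_neg h1, if_neg h2, Prod.mk.injEq] at h
      have ha1 := mul_left_cancel₀ hx0 h.1
      have ha2 := mul_left_cancel₀ hy0 h.2
      exact Prod.ext (by linear_combination ha1) ha2
  refine ⟨hfix, u, v, horbu, hcardu, hcardv, ⟨0, rfl⟩, ?_⟩
  intro w hw
  by_cases hw1 : w.1 = c0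
  · by_cases hw2 : w.2 = 0
    · exfalso
      have hweq : w = (c0, 0) := Prod.ext hw1 hw2
      have hfw : f w = w := (hfix w).mpr hweq
      rw [orbit_fixed hfw, Set.ncard_singleton] at hw
      omega
    · left
      apply orbit_eq_of_mem hinj
      rw [horbu]
      exact ⟨hw1, hw2⟩
  · right
    apply orbit_eq_of_mem hinj
    rw [horbv]
    exact hw1
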